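/- Let H be a separable Hilbert space, μ a finite measure, and F : Ω → H weakly measurable with ∫_Ω ‖F(ω)‖² dμ < ∞. The bounded linear operator T defined by ⟨Tu, v⟩ = ∫_Ω ⟨u, F(ω)⟩⟨F(ω), v⟩ dμ(ω) is compact. -/

import Mathlib

open MeasureTheory
open scoped RealInnerProductSpace

/-- On a separable Hilbert space, the operator `T` defined by
`⟪T u, v⟫ = ∫ ⟪u, F ω⟫ ⟪F ω, v⟫ dμ(ω)` is compact. -/
theorem stmt_7 {H : Type*} [NormedAddCommGroup H] [InnerProductSpace ℝ H] [CompleteSpace H]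
    [TopologicalSpace.SeparableSpace H]
    {Ω : Type*} [MeasurableSpace Ω] (μ : Measure Ω) [IsFiniteMeasure μ]
    (F : Ω → H) (hFmeas : ∀ u : H, Measurable fun ω => ⟪F ω, u⟫)
    (hFint : Integrable (fun ω => ‖F ω‖ ^ 2) μ)
    (T : H →L[ℝ] H)
    (hT : ∀ u v : H, ⟪T u, v⟫ = ∫ ω, ⟪u, F ω⟫ * ⟪F ω, v⟫ ∂μ) :
    IsCompactOperator (T : H → H) := by
  classical
  obtain ⟨d, hd⟩ := TopologicalSpace.exists_dense_seq H
  -- finite-dimensional subspaces spanned by the first `n` points of the dense sequence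
  set V : ℕ → Submodule ℝ H := fun n => Submodule.span ℝ (d '' Set.Iio n) with hVdef
  have hVfd : ∀ n, FiniteDimensional ℝ (V n) := fun n =>
    FiniteDimensional.span_of_finite ℝ ((Set.finite_Iio n).image d)
  -- orthogonal projections onto these subspaces, as maps `H → H`
  let P : ℕ → H →L[ℝ] H := fun n =>
    haveI := hVfd n
    (V n).subtypeL.comp ((V n).orthogonalProjectionOnto)
  have hPapply : ∀ n x,
      haveI := hVfd n
      P n x = ((V n).orthogonalProjectionOnto x : H) := fun n x => rfl
  -- self-adjointness of the projections
  have hPsa : ∀ n x y, ⟪P n x, y⟫ = ⟪x, P n y⟫ := by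
    intro n x y
    haveI := hVfd n
    exact Submodule.inner_starProjection_left_eq_right (V n) x y
  -- minimality
  have hPle : ∀ n x y, y ∈ V n → ‖x - P n x‖ ≤ ‖x - y‖ := by
    intro n x y hy
    haveI := hVfd n
    rw [show P n x = (V n).starProjection x from rfl, Submodule.starProjection_minimal]
    have : ‖x - (⟨y, hy⟩ : V n)‖ = ‖x - y‖ := rfl
    rw [← this]
    exact ciInf_le ⟨0, fun b hb => by rcases hb with ⟨w, rfl⟩; positivity⟩ _
  have hPcontract : ∀ n x, ‖x - P n x‖ ≤ ‖x‖ := by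
    intro n x
    simpa using hPle n x 0 (V n).zero_mem
  -- convergence of projections to the identity
  have htend : ∀ x : H, Filter.Tendsto (fun n => ‖x - P n x‖) Filter.atTop (nhds 0) := by
    intro x
    rw [Metric.tendsto_atTop]
    intro ε hε
    obtain ⟨i, hi⟩ := hd.exists_dist_lt x hε
    refine ⟨i + 1, fun n hn => ?_⟩
    have hdi : d i ∈ V n := Submodule.subset_span ⟨i, Set.mem_Iio.2 (by omega), rfl⟩
    have h1 : ‖x - P n x‖ ≤ ‖x - d i‖ := hPle n x (d i) hdi
    have h2 : ‖x - d i‖ < ε := by rwa [← dist_eq_norm]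
    rw [Real.dist_eq, sub_zero, abs_of_nonneg (norm_nonneg _)]
    exact lt_of_le_of_lt h1 h2
  -- the coordinate sum representing `⟪x, P n x⟫`
  let q : ℕ → Ω → ℝ := fun n ω =>
    haveI := hVfd n
    ∑ i, ⟪F ω, ((stdOrthonormalBasis ℝ (V n)) i : H)⟫ ^ 2
  have hqmeas : ∀ n, Measurable (q n) := by
    intro n
    haveI := hVfd n
    exact Finset.measurable_sum _ fun i _ => (hFmeas _).pow_const 2
  have hq : ∀ n x,
      haveI := hVfd n
      ⟪x, P n x⟫ = ∑ i, ⟪x, ((stdOrthonormalBasis ℝ (V n)) i : H)⟫ ^ 2 := by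
    intro n x
    haveI := hVfd n
    set b := stdOrthonormalBasis ℝ (V n) with hb
    have hproj := b.orthogonalProjectionOnto_apply_eq_sum x
    have : P n x = ∑ i, ⟪(b i : H), x⟫ • (b i : H) := by
      rw [hPapply, hproj]
      push_cast
      rfl
    rw [this, inner_sum]
    refine Finset.sum_congr rfl fun i _ => ?_
    rw [real_inner_smul_right, real_inner_comm x (b i : H), sq]
  -- norm of the residual
  have hnormsub : ∀ n x, ‖x - P n x‖ ^ 2 = ‖x‖ ^ 2 - ⟪x, P n x⟫ := by
    intro n x
    haveI := hVfd n
    have hmem : P n x ∈ V n := by rw [hPapply]; exact ((V n).orthogonalProjectionOnto x).2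
    have horth : x - P n x ∈ (V n)ᗮ := by
      rw [hPapply]
      exact Submodule.sub_starProjection_mem_orthogonal x
    have h0 : ⟪P n x, x - P n x⟫ = 0 :=
      (Submodule.mem_orthogonal (V n) _).1 horth (P n x) hmem
    have h1 : ⟪x, P n x⟫ = ‖P n x‖ ^ 2 := by
      have e1 : ⟪P n x, x⟫ - ⟪P n x, P n x⟫ = 0 := by
        rw [← inner_sub_right]; exact h0
      have e2 : ⟪P n x, P n x⟫ = ‖P n x‖ ^ 2 := real_inner_self_eq_norm_sq _
      have e3 : ⟪x, P n x⟫ = ⟪P n x, x⟫ := real_inner_comm _ _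
      linarith
    have := norm_sub_sq_real x (P n x)
    linarith
  -- the dominating sequence
  let h : ℕ → Ω → ℝ := fun n ω => ‖F ω‖ * ‖F ω - P n (F ω)‖
  have hh_eq : ∀ n, h n = fun ω =>
      Real.sqrt (‖F ω‖ ^ 2) * Real.sqrt (‖F ω‖ ^ 2 - q n ω) := by
    intro n
    funext ω
    have h1 : ‖F ω - P n (F ω)‖ = Real.sqrt (‖F ω‖ ^ 2 - q n ω) := by
      rw [← Real.sqrt_sq (norm_nonneg (F ω - P n (F ω))), hnormsub n (F ω), hq n (F ω)]
    simp only [h, h1, Real.sqrt_sq (norm_nonneg (F ω))]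
  have hh_aesm : ∀ n, AEStronglyMeasurable (h n) μ := by
    intro n
    rw [hh_eq n]
    exact (Real.continuous_sqrt.comp_aestronglyMeasurable hFint.1).mul
      (Real.continuous_sqrt.comp_aestronglyMeasurable
        (hFint.1.sub (hqmeas n).aestronglyMeasurable))
  have hh_nonneg : ∀ n ω, 0 ≤ h n ω := fun n ω => by positivity
  have hh_le : ∀ n ω, ‖h n ω‖ ≤ ‖F ω‖ ^ 2 := by
    intro n ω
    rw [Real.norm_eq_abs, abs_of_nonneg (hh_nonneg n ω)]
    calc ‖F ω‖ * ‖F ω - P n (F ω)‖ ≤ ‖F ω‖ * ‖F ω‖ :=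
          mul_le_mul_of_nonneg_left (hPcontract n (F ω)) (norm_nonneg _)
      _ = ‖F ω‖ ^ 2 := (sq ‖F ω‖).symm
  have hh_int : ∀ n, Integrable (h n) μ := fun n =>
    hFint.mono' (hh_aesm n) (Filter.Eventually.of_forall (hh_le n))
  set C : ℕ → ℝ := fun n => ∫ ω, h n ω ∂μ with hCdef
  have hC0 : ∀ n, 0 ≤ C n := fun n => integral_nonneg (hh_nonneg n)
  have hCtend : Filter.Tendsto C Filter.atTop (nhds 0) := by
    have := tendsto_integral_of_dominated_convergence (μ := μ) (F := h)
      (f := fun _ => (0 : ℝ)) (fun ω => ‖F ω‖ ^ 2)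
      hh_aesm hFint (fun n => Filter.Eventually.of_forall (hh_le n))
      (Filter.Eventually.of_forall fun ω => by
        show Filter.Tendsto (fun n => ‖F ω‖ * ‖F ω - P n (F ω)‖) Filter.atTop (nhds 0)
        simpa using (htend (F ω)).const_mul ‖F ω‖)
    simpa using this
  -- integrability of the pairing integrands
  have hinner_meas : ∀ u : H, Measurable fun ω => ⟪u, F ω⟫ := by
    intro u
    simpa [real_inner_comm] using hFmeas u
  have hint : ∀ u w : H, Integrable (fun ω => ⟪u, F ω⟫ * ⟪F ω, w⟫) μ := by
    intro u w
    refine (hFint.const_mul (‖u‖ * ‖w‖)).mono'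
      ((hinner_meas u).mul (hFmeas w)).aestronglyMeasurable
      (Filter.Eventually.of_forall fun ω => ?_)
    rw [Real.norm_eq_abs, abs_mul]
    calc |⟪u, F ω⟫| * |⟪F ω, w⟫| ≤ (‖u‖ * ‖F ω‖) * (‖F ω‖ * ‖w‖) :=
          mul_le_mul (abs_real_inner_le_norm _ _) (abs_real_inner_le_norm _ _)
            (abs_nonneg _) (by positivity)
      _ = ‖u‖ * ‖w‖ * ‖F ω‖ ^ 2 := by ring
  -- the key integral identity
  have hkey : ∀ n (u v : H),
      ⟪T u - P n (T u), v⟫ = ∫ ω, ⟪u, F ω⟫ * ⟪F ω - P n (F ω), v⟫ ∂μ := by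
    intro n u v
    calc ⟪T u - P n (T u), v⟫ = ⟪T u, v⟫ - ⟪P n (T u), v⟫ := inner_sub_left _ _ _
      _ = ⟪T u, v⟫ - ⟪T u, P n v⟫ := by rw [hPsa]
      _ = (∫ ω, ⟪u, F ω⟫ * ⟪F ω, v⟫ ∂μ) - ∫ ω, ⟪u, F ω⟫ * ⟪F ω, P n v⟫ ∂μ := by
          rw [hT, hT]
      _ = ∫ ω, (⟪u, F ω⟫ * ⟪F ω, v⟫ - ⟪u, F ω⟫ * ⟪F ω, P n v⟫) ∂μ :=
          (integral_sub (hint u v) (hint u (P n v))).symm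
      _ = ∫ ω, ⟪u, F ω⟫ * ⟪F ω - P n (F ω), v⟫ ∂μ := by
          refine integral_congr_ae (Filter.Eventually.of_forall fun ω => ?_)
          simp only [Pi.sub_apply]
          rw [inner_sub_left, ← hPsa n (F ω) v]
          ring
  -- the uniform bound
  have hbound : ∀ n (u v : H), |⟪T u - P n (T u), v⟫| ≤ ‖u‖ * ‖v‖ * C n := by
    intro n u v
    rw [hkey n u v]
    have hfint : Integrable (fun ω => ⟪u, F ω⟫ * ⟪F ω - P n (F ω), v⟫) μ := by
      refine ((hint u v).sub (hint u (P n v))).congr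
        (Filter.Eventually.of_forall fun ω => ?_)
      simp only [Pi.sub_apply]
      rw [inner_sub_left, ← hPsa n (F ω) v]
      ring
    calc |∫ ω, ⟪u, F ω⟫ * ⟪F ω - P n (F ω), v⟫ ∂μ|
        = ‖∫ ω, ⟪u, F ω⟫ * ⟪F ω - P n (F ω), v⟫ ∂μ‖ := (Real.norm_eq_abs _).symm
      _ ≤ ∫ ω, ‖⟪u, F ω⟫ * ⟪F ω - P n (F ω), v⟫‖ ∂μ := norm_integral_le_integral_norm _
      _ = ∫ ω, |⟪u, F ω⟫ * ⟪F ω - P n (F ω), v⟫| ∂μ := by simp only [Real.norm_eq_abs]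
      _ ≤ ∫ ω, ‖u‖ * ‖v‖ * h n ω ∂μ := by
          refine integral_mono hfint.abs ((hh_int n).const_mul _) fun ω => ?_
          rw [abs_mul]
          calc |⟪u, F ω⟫| * |⟪F ω - P n (F ω), v⟫|
              ≤ (‖u‖ * ‖F ω‖) * (‖F ω - P n (F ω)‖ * ‖v‖) :=
                mul_le_mul (abs_real_inner_le_norm _ _) (abs_real_inner_le_norm _ _)
                  (abs_nonneg _) (by positivity)
            _ = ‖u‖ * ‖v‖ * (‖F ω‖ * ‖F ω - P n (F ω)‖) := by ring
      _ = ‖u‖ * ‖v‖ * C n := integral_const_mul _ _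
  -- operator-norm bound for the residual
  have hTP : ∀ n (u : H), ‖T u - P n (T u)‖ ≤ C n * ‖u‖ := by
    intro n u
    rcases eq_or_ne (T u - P n (T u)) 0 with hz | hz
    · rw [hz, norm_zero]; positivity
    · have hwpos : 0 < ‖T u - P n (T u)‖ := norm_pos_iff.2 hz
      have h1 : ‖T u - P n (T u)‖ ^ 2 ≤ ‖u‖ * ‖T u - P n (T u)‖ * C n := by
        calc ‖T u - P n (T u)‖ ^ 2 = ⟪T u - P n (T u), T u - P n (T u)⟫ :=
              (real_inner_self_eq_norm_sq _).symm
          _ ≤ |⟪T u - P n (T u), T u - P n (T u)⟫| := le_abs_self _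
          _ ≤ ‖u‖ * ‖T u - P n (T u)‖ * C n := hbound n u _
      nlinarith [hwpos, h1]
  -- the approximating operators
  set S : ℕ → H →L[ℝ] H := fun n => (P n).comp T with hSdef
  have hTS : ∀ n, ‖T - S n‖ ≤ C n := by
    intro n
    refine ContinuousLinearMap.opNorm_le_bound _ (hC0 n) fun u => ?_
    simpa [hSdef, ContinuousLinearMap.sub_apply] using hTP n u
  have hStend : Filter.Tendsto S Filter.atTop (nhds T) := by
    rw [tendsto_iff_norm_sub_tendsto_zero]
    refine squeeze_zero (fun n => norm_nonneg _) (fun n => ?_) hCtend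
    rw [norm_sub_rev]
    exact hTS n
  -- each approximant is compact
  have hScompact : ∀ n, IsCompactOperator (S n : H → H) := by
    intro n
    haveI := hVfd n
    have hPc : IsCompactOperator (P n : H → H) := by
      refine ⟨Subtype.val '' Metric.closedBall (0 : V n) 1, ?_, ?_⟩
      · exact ((ProperSpace.isCompact_closedBall _ _).image continuous_subtype_val)
      · refine Filter.mem_of_superset (Metric.ball_mem_nhds 0 one_pos) ?_
        intro x hx
        refine ⟨(V n).orthogonalProjectionOnto x, ?_, (hPapply n x).symm⟩
        rw [Metric.mem_closedBall, dist_zero_right]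
        calc ‖(V n).orthogonalProjectionOnto x‖
            ≤ ‖(V n).orthogonalProjectionOnto‖ * ‖x‖ := ContinuousLinearMap.le_opNorm _ _
          _ ≤ 1 * ‖x‖ := mul_le_mul_of_nonneg_right (Submodule.orthogonalProjectionOnto_norm_le (V n)) (norm_nonneg _)
          _ ≤ 1 := by
              rw [one_mul]
              exact le_of_lt (by simpa [dist_zero_right] using hx)
    have := hPc.comp_clm T
    exact this
  exact isCompactOperator_of_tendsto hStend (Filter.Eventually.of_forall hScompact)
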